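/- Let G be a finite connected simple graph on vertex set V with |V| ≥ 2, let V₀ ⊆ V be nonempty, let g : V₀ → ℝ, let p ∈ (0,1) and q = 1 − p. Set m = min_{x∈V₀} g(x) and M = max_{x∈V₀} g(x). Define v₀ : V → ℝ by v₀(x) = g(x) for x ∈ V₀ and v₀(x) = M otherwise, and iteratively v_{n+1}(x) = g(x) for x ∈ V₀ and v_{n+1}(x) = p·max_{y∼x} v_n(y) + q·min_{y∼x} v_n(y) for x ∈ V∖V₀. Then for all n ≥ 0 and all x ∈ V, m ≤ v_{n+1}(x) ≤ v_n(x); i.e., the sequence of functions is pointwise nonincreasing and bounded below by m. -/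
import Mathlib


/-- In a connected graph with at least two vertices every vertex has a neighbor. -/
lemma neighborFinset_nonempty_of_connected {V : Type*} [Fintype V]
    (G : SimpleGraph V) [DecidableRel G.Adj]
    (hc : G.Connected) (h2 : 1 < Fintype.card V) (x : V) :
    (G.neighborFinset x).Nonempty := by
  obtain ⟨y, hy⟩ := Fintype.exists_ne_of_one_lt_card h2 x
  obtain ⟨w⟩ := hc.preconnected x y
  cases w with
  | nil => exact absurd rfl hy
  | cons h _ => exact ⟨_, (G.mem_neighborFinset x _).mpr h⟩

/-- for the iteration started from above (`v₀ = g` on `V₀`, `v₀ = M` off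
`V₀`, and `v_{n+1} = g` on `V₀`, `v_{n+1}(x) = p ⬝ max_{y∼x} v_n(y) + q ⬝ min_{y∼x} v_n(y)`
off `V₀`), the sequence is pointwise nonincreasing and bounded below by
`m = min_{x ∈ V₀} g(x)`: for all `n` and `x`, `m ≤ v_{n+1}(x) ≤ v_n(x)`. -/
theorem stmt_17 {V : Type*} [Fintype V] [DecidableEq V]
    (G : SimpleGraph V) [DecidableRel G.Adj]
    (hcard : 1 < Fintype.card V) (hconn : G.Connected)
    (V₀ : Finset V) (hV₀ : V₀.Nonempty) (g : V → ℝ)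
    (p q : ℝ) (hp : p ∈ Set.Ioo (0 : ℝ) 1) (hq : q = 1 - p)
    (m M : ℝ) (hm : m = V₀.inf' hV₀ g) (hM : M = V₀.sup' hV₀ g)
    (v : ℕ → V → ℝ)
    (hv0 : ∀ x, v 0 x = if x ∈ V₀ then g x else M)
    (hstep : ∀ n x, v (n + 1) x = if x ∈ V₀ then g x else
      p * (G.neighborFinset x).sup'
            (neighborFinset_nonempty_of_connected G hconn hcard x) (v n)
        + q * (G.neighborFinset x).inf'
            (neighborFinset_nonempty_of_connected G hconn hcard x) (v n)) :
    ∀ n x, m ≤ v (n + 1) x ∧ v (n + 1) x ≤ v n x := by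
  obtain ⟨hp0, hp1⟩ := hp
  have hq0 : 0 < q := by rw [hq]; linarith
  have hpq : p + q = 1 := by rw [hq]; ring
  have hmg : ∀ x ∈ V₀, m ≤ g x := fun x hx => hm ▸ Finset.inf'_le g hx
  have hgM : ∀ x ∈ V₀, g x ≤ M := fun x hx => hM ▸ Finset.le_sup' g hx
  have hmM : m ≤ M := by
    obtain ⟨x0, hx0⟩ := hV₀
    exact le_trans (hmg _ hx0) (hgM _ hx0)
  have hlow : ∀ n x, m ≤ v n x := by
    intro n
    induction n with
    | zero =>
      intro x
      rw [hv0]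
      split
      · exact hmg _ ‹_›
      · exact hmM
    | succ n ih =>
      intro x
      rw [hstep]
      split
      · exact hmg _ ‹_›
      · obtain ⟨y, hy⟩ := neighborFinset_nonempty_of_connected G hconn hcard x
        have h1 : m ≤ (G.neighborFinset x).sup'
            (neighborFinset_nonempty_of_connected G hconn hcard x) (v n) :=
          le_trans (ih y) (Finset.le_sup' _ hy)
        have h2 : m ≤ (G.neighborFinset x).inf'
            (neighborFinset_nonempty_of_connected G hconn hcard x) (v n) :=
          Finset.le_inf' _ _ fun z _ => ih z
        have t1 := mul_le_mul_of_nonneg_left h1 hp0.le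
        have t2 := mul_le_mul_of_nonneg_left h2 hq0.le
        have e : p * m + q * m = m := by rw [← add_mul, hpq, one_mul]
        linarith
  have hmono : ∀ n x, v (n + 1) x ≤ v n x := by
    intro n
    induction n with
    | zero =>
      intro x
      rw [hstep, hv0]
      split
      · exact le_refl _
      · have hub : ∀ y, v 0 y ≤ M := by
          intro y
          rw [hv0]
          split
          · exact hgM _ ‹_›
          · exact le_refl _
        obtain ⟨y, hy⟩ := neighborFinset_nonempty_of_connected G hconn hcard x
        have h1 : (G.neighborFinset x).sup'
            (neighborFinset_nonempty_of_connected G hconn hcard x) (v 0) ≤ M :=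
          Finset.sup'_le _ _ fun z _ => hub z
        have h2 : (G.neighborFinset x).inf'
            (neighborFinset_nonempty_of_connected G hconn hcard x) (v 0) ≤ M :=
          le_trans (Finset.inf'_le _ hy) (hub y)
        have t1 := mul_le_mul_of_nonneg_left h1 hp0.le
        have t2 := mul_le_mul_of_nonneg_left h2 hq0.le
        have e : p * M + q * M = M := by rw [← add_mul, hpq, one_mul]
        linarith
    | succ n ih =>
      intro x
      rw [hstep (n + 1), hstep n]
      split
      · exact le_refl _
      · have h1 : (G.neighborFinset x).sup'
            (neighborFinset_nonempty_of_connected G hconn hcard x) (v (n + 1)) ≤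
            (G.neighborFinset x).sup'
            (neighborFinset_nonempty_of_connected G hconn hcard x) (v n) :=
          Finset.sup'_le _ _ fun z hz => le_trans (ih z) (Finset.le_sup' _ hz)
        have h2 : (G.neighborFinset x).inf'
            (neighborFinset_nonempty_of_connected G hconn hcard x) (v (n + 1)) ≤
            (G.neighborFinset x).inf'
            (neighborFinset_nonempty_of_connected G hconn hcard x) (v n) :=
          Finset.le_inf' _ _ fun z hz => le_trans (Finset.inf'_le _ hz) (ih z)
        have t1 := mul_le_mul_of_nonneg_left h1 hp0.le
        have t2 := mul_le_mul_of_nonneg_left h2 hq0.le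
        linarith
  exact fun n x => ⟨hlow (n + 1) x, hmono n x⟩
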